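/- Let S := {n ∈ ℕ | n ≡ 2 (mod 10), n ≥ 2} = 2 + 10ℕ₀ and T := {n ∈ ℕ | n ≡ 3 (mod 10), n ≥ 3} = 3 + 10ℕ₀. Then M(S ∪ T) = M(S) ∪ M(T); that is, the inclusion M(S ∪ T) ⊆ M(S) ∪ M(T) can hold with equality. -/
import Mathlib


/-- `Subseq x y` means the decimal digit string of `x` is a subsequence of that of `y`. -/
def Subseq (x y : ℕ) : Prop := (Nat.digits 10 x).Sublist (Nat.digits 10 y)

/-- The minimal set of `S`: elements of `S` containing no smaller element of `S`
as a subsequence of their decimal digits. -/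
def minimalSet (S : Set ℕ) : Set ℕ := {s ∈ S | ¬ ∃ n ∈ S, n < s ∧ Subseq n s}

lemma digits_single (d : ℕ) (h1 : 0 < d) (h2 : d < 10) : Nat.digits 10 d = [d] := by
  rw [Nat.digits_def' (by norm_num : (1:ℕ) < 10) h1, Nat.mod_eq_of_lt h2,
    Nat.div_eq_of_lt h2]
  simp

lemma subseq_digit (d k : ℕ) (h1 : 0 < d) (h2 : d < 10) : Subseq d (d + 10 * k) := by
  unfold Subseq
  rcases Nat.eq_zero_or_pos k with hk | hk
  · simp [hk]
  rw [digits_single d h1 h2, Nat.digits_def' (by norm_num : (1:ℕ) < 10) (by omega)]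
  have h3 : (d + 10 * k) % 10 = d := by omega
  rw [h3]
  exact (List.nil_sublist _).cons₂ d

lemma not23 : ¬ Subseq 2 3 := by
  unfold Subseq
  rw [digits_single 2 (by norm_num) (by norm_num), digits_single 3 (by norm_num) (by norm_num)]
  simp

lemma minS : minimalSet {n : ℕ | ∃ k : ℕ, n = 2 + 10 * k} = {2} := by
  ext n
  simp only [minimalSet, Set.mem_setOf_eq, Set.mem_singleton_iff]
  constructor
  · rintro ⟨⟨k, rfl⟩, h⟩
    by_contra hne
    exact h ⟨2, ⟨0, rfl⟩, by omega, subseq_digit 2 k (by norm_num) (by norm_num)⟩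
  · rintro rfl
    exact ⟨⟨0, rfl⟩, by rintro ⟨m, ⟨k, rfl⟩, hlt, -⟩; omega⟩

lemma minT : minimalSet {n : ℕ | ∃ k : ℕ, n = 3 + 10 * k} = {3} := by
  ext n
  simp only [minimalSet, Set.mem_setOf_eq, Set.mem_singleton_iff]
  constructor
  · rintro ⟨⟨k, rfl⟩, h⟩
    by_contra hne
    exact h ⟨3, ⟨0, rfl⟩, by omega, subseq_digit 3 k (by norm_num) (by norm_num)⟩
  · rintro rfl
    exact ⟨⟨0, rfl⟩, by rintro ⟨m, ⟨k, rfl⟩, hlt, -⟩; omega⟩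

lemma minU : minimalSet ({n : ℕ | ∃ k : ℕ, n = 2 + 10 * k} ∪ {n : ℕ | ∃ k : ℕ, n = 3 + 10 * k})
    = {2, 3} := by
  ext n
  simp only [minimalSet, Set.mem_setOf_eq, Set.mem_union, Set.mem_insert_iff,
    Set.mem_singleton_iff]
  constructor
  · rintro ⟨(⟨k, rfl⟩ | ⟨k, rfl⟩), h⟩
    · by_contra hne
      exact h ⟨2, Or.inl ⟨0, rfl⟩, by omega, subseq_digit 2 k (by norm_num) (by norm_num)⟩
    · by_contra hne
      exact h ⟨3, Or.inr ⟨0, rfl⟩, by omega, subseq_digit 3 k (by norm_num) (by norm_num)⟩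
  · rintro (rfl | rfl)
    · exact ⟨Or.inl ⟨0, rfl⟩, by rintro ⟨m, (⟨k, rfl⟩ | ⟨k, rfl⟩), hlt, -⟩ <;> omega⟩
    · refine ⟨Or.inr ⟨0, rfl⟩, ?_⟩
      rintro ⟨m, (⟨k, rfl⟩ | ⟨k, rfl⟩), hlt, hsub⟩
      · have : k = 0 := by omega
        subst this
        exact not23 hsub
      · omega

theorem minimalSet_union_eq_example :
    minimalSet ({n : ℕ | ∃ k : ℕ, n = 2 + 10 * k} ∪ {n : ℕ | ∃ k : ℕ, n = 3 + 10 * k}) =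
      minimalSet {n : ℕ | ∃ k : ℕ, n = 2 + 10 * k} ∪
        minimalSet {n : ℕ | ∃ k : ℕ, n = 3 + 10 * k} := by
  rw [minU, minS, minT]
  rfl
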